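/- Let q be a power of 2, let F be a finite field with q^6 elements, let s ∈ {1,5} and let c ∈ F. If the map f_{c,s} : F → F defined by f_{c,s}(x) = x^{q^s} + x^{q^{3s}} + c·x^{q^{5s}} is scattered, then c^{q^4+q^2+1} + c^{q^4} + c^{q^2} + c ≠ 0 (that is, the norm of c over 𝔽_{q^2} plus the trace of c over 𝔽_{q^2} is nonzero). -/

import Mathlib

noncomputable section

def F1 (q : ℕ) {F : Type*} [Field F] (c : F) : F :=
  c ^ (q ^ 4 + 2 * q ^ 3 + q ^ 2 + q + 1) + c ^ (q ^ 4 + q ^ 3 + q ^ 2 + 1)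
    + c ^ (q ^ 3 + q + 1) + c + c ^ (2 * q ^ 3 + q ^ 2 + q) + c ^ (q ^ 3 + q ^ 2 + q)
    + c ^ (q ^ 3) + 1

def F2 (q : ℕ) {F : Type*} [Field F] (c : F) : F :=
  c ^ (q ^ 3 + q ^ 2 + 2 * q + 2) + c ^ (q ^ 2 + q + 2) + c ^ (q ^ 3 + 2 * q ^ 2 + 2 * q + 1)
    + c ^ (2 * q ^ 3 + 2 * q ^ 2 + q + 1) + c ^ (q ^ 2 + q + 1) + c ^ (q ^ 3 + q + 1)
    + c ^ (q ^ 3 + q ^ 2 + 1) + c + c ^ (2 * q ^ 3 + q ^ 2 + q) + c ^ (q ^ 3 + q ^ 2 + q)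
    + c ^ (q ^ 3) + 1

def F3 (q : ℕ) {F : Type*} [Field F] (c : F) : F := c ^ (q ^ 2 + q + 1) + 1

def F4 (q : ℕ) {F : Type*} [Field F] (c : F) : F :=
  c ^ (2 * q ^ 2 + q + 4) + c ^ (3 * q ^ 2 + 2 * q + 3) + c ^ (q ^ 2 + 2 * q + 3)
    + c ^ (3 * q ^ 2 + q + 3) + c ^ (q ^ 2 + q + 3) + c ^ (2 * q ^ 2 + 3) + c ^ (q ^ 2 + 3)
    + c ^ (4 * q ^ 2 + q + 2) + c ^ (q + 2) + c ^ (3 * q ^ 2 + 2) + c ^ 2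
    + c ^ (3 * q ^ 2 + 2 * q + 1) + c ^ (q ^ 2 + 2 * q + 1) + c ^ (3 * q ^ 2 + q + 1)
    + c ^ (q ^ 2 + q + 1) + c ^ (3 * q ^ 2 + 1) + c + c ^ (2 * q ^ 2 + q) + c ^ (2 * q ^ 2)
    + c ^ (q ^ 2)

def F5 (q : ℕ) {F : Type*} [Field F] (c : F) : F :=
  c ^ (2 * q ^ 2 + q + 2) + c ^ (q ^ 2 + q + 2) + c ^ (2 * q ^ 2 + 2)
    + c ^ (2 * q ^ 2 + q + 1) + c ^ (q ^ 2 + q + 1) + 1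

def frakC (q : ℕ) (F : Type*) [Field F] : Set F :=
  {c | c ^ (q ^ 2) ≠ c ∧ F1 q c = 0 ∧ F2 q c = 0 ∧ F3 q c * F4 q c * F5 q c ≠ 0}

def IsScattered (q : ℕ) {F : Type*} [Field F] (f : F → F) : Prop :=
  ∀ y z : F, y ≠ 0 → z ≠ 0 → f y * z = f z * y → ∃ l : F, l ^ q = l ∧ y = l * z

lemma charTwoAux (F : Type) [Field F] [Fintype F] (k : ℕ) (hk : 1 ≤ k)
    (hcard : Fintype.card F = 2 ^ k) : CharP F 2 := by
  have inst : CharP F (ringChar F) := ringChar.charP F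
  obtain ⟨n, hp, hc⟩ := FiniteField.card F (ringChar F)
  have hdvd : ringChar F ∣ 2 ^ k := by
    rw [← hcard, hc]
    exact dvd_pow_self _ (by exact_mod_cast n.ne_zero)
  have h2 : ringChar F = 2 :=
    (Nat.prime_dvd_prime_iff_eq hp Nat.prime_two).mp (hp.dvd_of_dvd_pow hdvd)
  rwa [h2] at inst

lemma frobAdd {F : Type} [Field F] [CharP F 2] {q e : ℕ} (hq : q = 2 ^ e)
    (n : ℕ) (a b : F) : (a + b) ^ q ^ n = a ^ q ^ n + b ^ q ^ n := by
  subst hq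
  rw [← pow_mul]
  exact add_pow_char_pow ..

lemma rootExtract {F : Type} [Field F] [Fintype F] {q : ℕ} (hq2 : 2 ≤ q)
    (hF : Fintype.card F = q ^ 6) (y : F) (hy : y ≠ 0)
    (hnorm : y ^ (q ^ 4 + q ^ 2 + 1) = 1) : ∃ x : F, x ≠ 0 ∧ x ^ q ^ 2 = y * x := by
  classical
  obtain ⟨g, hg⟩ := IsCyclic.exists_generator (α := Fˣ)
  have hcardu : Fintype.card Fˣ = q ^ 6 - 1 := by rw [Fintype.card_units, hF]
  have horder : orderOf g = q ^ 6 - 1 := by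
    rw [orderOf_eq_card_of_forall_mem_zpowers hg, Nat.card_eq_fintype_card, hcardu]
  set u : Fˣ := Units.mk0 y hy with hu
  obtain ⟨m, hm0⟩ := mem_powers_iff_mem_zpowers.mpr (hg u)
  have hm : g ^ m = u := hm0
  have hu1 : u ^ (q ^ 4 + q ^ 2 + 1) = 1 := by
    ext
    push_cast
    simpa [hu] using hnorm
  have hdvd : orderOf g ∣ m * (q ^ 4 + q ^ 2 + 1) := by
    apply orderOf_dvd_of_pow_eq_one
    rw [pow_mul, hm, hu1]
  have hfact : (q ^ 2 - 1) * (q ^ 4 + q ^ 2 + 1) = q ^ 6 - 1 := by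
    have e1 : q ^ 2 * (q ^ 4 + q ^ 2 + 1) = q ^ 6 + q ^ 4 + q ^ 2 := by ring
    have e2 : (q ^ 2 - 1) * (q ^ 4 + q ^ 2 + 1)
        = q ^ 2 * (q ^ 4 + q ^ 2 + 1) - (q ^ 4 + q ^ 2 + 1) := Nat.sub_one_mul ..
    have h1 : 1 ≤ q ^ 2 := Nat.one_le_pow _ _ (by omega)
    omega
  have hdvd2 : (q ^ 2 - 1) ∣ m := by
    have : (q ^ 2 - 1) * (q ^ 4 + q ^ 2 + 1) ∣ m * (q ^ 4 + q ^ 2 + 1) := by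
      rw [hfact, ← horder]; exact hdvd
    exact (Nat.mul_dvd_mul_iff_right (by positivity)).mp this
  refine ⟨((g ^ (m / (q ^ 2 - 1)) : Fˣ) : F), Units.ne_zero _, ?_⟩
  have hx : ((g ^ (m / (q ^ 2 - 1)) : Fˣ) : F) ^ (q ^ 2 - 1) = y := by
    have : (g ^ (m / (q ^ 2 - 1))) ^ (q ^ 2 - 1) = u := by
      rw [← pow_mul, Nat.div_mul_cancel hdvd2, hm]
    calc ((g ^ (m / (q ^ 2 - 1)) : Fˣ) : F) ^ (q ^ 2 - 1)
        = (((g ^ (m / (q ^ 2 - 1))) ^ (q ^ 2 - 1) : Fˣ) : F) := by push_cast; ring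
      _ = y := by rw [this]; rfl
  calc ((g ^ (m / (q ^ 2 - 1)) : Fˣ) : F) ^ q ^ 2
      = ((g ^ (m / (q ^ 2 - 1)) : Fˣ) : F) ^ (q ^ 2 - 1) * ((g ^ (m / (q ^ 2 - 1)) : Fˣ) : F) := by
        rw [← pow_succ]
        congr 1
        have : 1 ≤ q ^ 2 := Nat.one_le_pow _ _ (by omega)
        omega
    _ = y * _ := by rw [hx]

lemma muExists {F : Type} [Field F] [Fintype F] {q : ℕ} (hq2 : 2 ≤ q)
    (hF : Fintype.card F = q ^ 6) : ∃ μ : F, μ ≠ 0 ∧ μ ^ q ^ 2 = μ ∧ μ ^ q ≠ μ := by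
  classical
  obtain ⟨g, hg⟩ := IsCyclic.exists_generator (α := Fˣ)
  have hcardu : Fintype.card Fˣ = q ^ 6 - 1 := by rw [Fintype.card_units, hF]
  have horder : orderOf g = q ^ 6 - 1 := by
    rw [orderOf_eq_card_of_forall_mem_zpowers hg, Nat.card_eq_fintype_card, hcardu]
  have hfact : (q ^ 2 - 1) * (q ^ 4 + q ^ 2 + 1) = q ^ 6 - 1 := by
    have e1 : q ^ 2 * (q ^ 4 + q ^ 2 + 1) = q ^ 6 + q ^ 4 + q ^ 2 := by ring
    have e2 : (q ^ 2 - 1) * (q ^ 4 + q ^ 2 + 1)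
        = q ^ 2 * (q ^ 4 + q ^ 2 + 1) - (q ^ 4 + q ^ 2 + 1) := Nat.sub_one_mul ..
    have h1 : 1 ≤ q ^ 2 := Nat.one_le_pow _ _ (by omega)
    omega
  set K : ℕ := q ^ 4 + q ^ 2 + 1 with hK
  refine ⟨((g ^ K : Fˣ) : F), Units.ne_zero _, ?_, ?_⟩
  · have h1 : (g ^ K) ^ (q ^ 2) = (g ^ K) ^ 1 := by
      have : (g ^ K) ^ (q ^ 2) = (g ^ K) ^ (q ^ 2 - 1) * (g ^ K) ^ 1 := by
        rw [← pow_add]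
        congr 1
        have : 1 ≤ q ^ 2 := Nat.one_le_pow _ _ (by omega)
        omega
      rw [this, ← pow_mul, mul_comm K _, hfact, ← horder, pow_orderOf_eq_one, one_mul]
    have := congrArg (Units.val) h1
    push_cast at this
    simpa using this
  · intro hcon
    have h1 : (g ^ K) ^ q = (g ^ K) ^ 1 := by
      ext
      push_cast
      simpa using hcon
    have h2 : (g ^ (K * q - K * 1)) = 1 := by
      have hle : K * 1 ≤ K * q := Nat.mul_le_mul_left _ (by omega)
      have : g ^ (K * q - K * 1) * g ^ (K * 1) = g ^ (K * 1) := by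
        rw [← pow_add, Nat.sub_add_cancel hle, pow_mul, pow_mul]
        exact h1
      simpa using mul_eq_right.mp this
    have hdvd : q ^ 6 - 1 ∣ K * q - K := by
      rw [← horder]
      exact orderOf_dvd_of_pow_eq_one (by simpa using h2)
    have hpos : 0 < K * q - K := by
      have : K * 2 ≤ K * q := Nat.mul_le_mul_left _ hq2
      have hKpos : 0 < K := by positivity
      omega
    have hle := Nat.le_of_dvd hpos hdvd
    have hKpos : 0 < K := by positivity
    have h5 : K * q - K < K * q := Nat.sub_lt (by positivity) hKpos
    have hqle : q ≤ q ^ 2 - 1 := by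
      have : q + 1 ≤ q ^ 2 := by nlinarith
      omega
    have h6 : K * q ≤ (q ^ 2 - 1) * K := by
      rw [mul_comm]
      exact Nat.mul_le_mul_right _ hqle
    omega

lemma genOutside {F : Type} [Field F] [Fintype F] {q : ℕ} (hq2 : 2 ≤ q)
    (hF : Fintype.card F = q ^ 6) : ∃ v : F, v ^ q ^ 2 ≠ v := by
  classical
  obtain ⟨g, hg⟩ := IsCyclic.exists_generator (α := Fˣ)
  have hcardu : Fintype.card Fˣ = q ^ 6 - 1 := by rw [Fintype.card_units, hF]
  have horder : orderOf g = q ^ 6 - 1 := by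
    rw [orderOf_eq_card_of_forall_mem_zpowers hg, Nat.card_eq_fintype_card, hcardu]
  refine ⟨((g : Fˣ) : F), fun hcon => ?_⟩
  have h1 : g ^ (q ^ 2) = g ^ 1 := by
    ext
    push_cast
    simpa using hcon
  have h2 : g ^ (q ^ 2 - 1) = 1 := by
    have hle : 1 ≤ q ^ 2 := Nat.one_le_pow _ _ (by omega)
    have : g ^ (q ^ 2 - 1) * g ^ 1 = g ^ 1 := by
      rw [← pow_add, Nat.sub_add_cancel hle, ← h1]
    simpa using mul_eq_right.mp this
  have hdvd : q ^ 6 - 1 ∣ q ^ 2 - 1 := by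
    rw [← horder]; exact orderOf_dvd_of_pow_eq_one h2
  have hle := Nat.le_of_dvd (by
    have : 4 ≤ q ^ 2 := by nlinarith
    omega) hdvd
  have hlt : q ^ 2 < q ^ 6 := Nat.pow_lt_pow_right (by omega) (by omega)
  have h1 : 1 ≤ q ^ 2 := Nat.one_le_pow _ _ (by omega)
  omega

lemma muPowOdd {F : Type} [Field F] {q : ℕ} {μ : F} (hμ2 : μ ^ q ^ 2 = μ) (k : ℕ) :
    μ ^ q ^ (2 * k + 1) = μ ^ q := by
  induction k with
  | zero => norm_num
  | succ n ih =>
    rw [show q ^ (2 * (n + 1) + 1) = q ^ 2 * q ^ (2 * n + 1) by ring, pow_mul, hμ2, ih]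

lemma finalContr {F : Type} [Field F] [Fintype F] {q : ℕ} (hq2 : 2 ≤ q)
    (hF : Fintype.card F = q ^ 6) {f : F → F}
    (hsemi : ∀ μ x : F, μ ^ q ^ 2 = μ → f (μ * x) = μ ^ q * f x)
    (hscat : IsScattered q f) (x : F) (hx : x ≠ 0) (hfx : f x = 0) : False := by
  obtain ⟨μ, hμ0, hμ2, hμq⟩ := muExists hq2 hF
  obtain ⟨l, hl, heq⟩ := hscat (μ * x) x (mul_ne_zero hμ0 hx) hx
    (by rw [hsemi μ x hμ2, hfx, mul_zero, zero_mul, zero_mul])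
  have hμl : μ = l := mul_right_cancel₀ hx heq
  apply hμq
  rw [hμl]
  exact hl

theorem statement9 (e q : ℕ) (he : 1 ≤ e) (hq : q = 2 ^ e)
    (F : Type) [Field F] [Fintype F] (hF : Fintype.card F = q ^ 6)
    (s : ℕ) (hs : s = 1 ∨ s = 5) (c : F)
    (hscat : IsScattered q
      (fun x : F => x ^ (q ^ s) + x ^ (q ^ (3 * s)) + c * x ^ (q ^ (5 * s)))) :
    c ^ (q ^ 4 + q ^ 2 + 1) + c ^ (q ^ 4) + c ^ (q ^ 2) + c ≠ 0 := by
  intro hc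
  have hq2 : 2 ≤ q := by
    subst hq
    calc 2 = 2 ^ 1 := (pow_one 2).symm
    _ ≤ 2 ^ e := Nat.pow_le_pow_right (by norm_num) he
  have hqne : q ≠ 0 := by omega
  haveI hchar : CharP F 2 := charTwoAux F (e * 6) (by omega) (by rw [hF, hq, ← pow_mul])
  have h2F : (2 : F) = 0 := by exact_mod_cast CharP.cast_eq_zero F 2
  have hfrob : ∀ (n : ℕ) (a b : F), (a + b) ^ q ^ n = a ^ q ^ n + b ^ q ^ n :=
    fun n a b => frobAdd hq n a b
  have hq6 : ∀ a : F, a ^ q ^ 6 = a := by intro a; rw [← hF]; exact FiniteField.pow_card a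
  have hshift : ∀ (a : F) (k : ℕ), a ^ q ^ (k + 6) = a ^ q ^ k := by
    intro a k; rw [show q ^ (k + 6) = q ^ 6 * q ^ k by ring, pow_mul, hq6]
  have hred : ∀ (x : F) (a b : ℕ), a + 6 = b → x ^ q ^ b = x ^ q ^ a := by
    intro x a b h; rw [← h]; exact hshift x a
  set d : F := c ^ q ^ 5 with hd
  set d2 : F := d ^ q ^ 2 with hd2
  set d4 : F := d2 ^ q ^ 2 with hd4
  have hdw : d4 ^ q ^ 2 = d := by
    rw [hd4, hd2, ← pow_mul, ← pow_mul, show q ^ 2 * (q ^ 2 * q ^ 2) = q ^ 6 by ring, hq6]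
  have hd2c : d2 = c ^ q ^ 7 := by
    rw [hd2, hd, ← pow_mul, show q ^ 5 * q ^ 2 = q ^ 7 by ring]
  have hd4c : d4 = c ^ q ^ 9 := by
    rw [hd4, hd2c, ← pow_mul, show q ^ 7 * q ^ 2 = q ^ 9 by ring]
  have hE : d * d2 * d4 + d + d2 + d4 = 0 := by
    have hE0 := congrArg (fun a : F => a ^ q ^ 5) hc
    rw [hfrob, hfrob, hfrob, zero_pow (pow_ne_zero 5 hqne)] at hE0
    rw [← pow_mul, ← pow_mul, ← pow_mul] at hE0
    rw [show (q ^ 4 + q ^ 2 + 1) * q ^ 5 = q ^ 9 + (q ^ 7 + q ^ 5) by ring,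
      show q ^ 4 * q ^ 5 = q ^ 9 by ring, show q ^ 2 * q ^ 5 = q ^ 7 by ring,
      pow_add, pow_add] at hE0
    rw [← hd, ← hd2c, ← hd4c] at hE0
    linear_combination hE0
  -- nonzero denominators (used in generic case)
  rcases hs with rfl | rfl
  · -- s = 1
    simp only [mul_one, pow_one] at hscat
    have hf5 : ∀ x : F, (x ^ q + x ^ q ^ 3 + c * x ^ q ^ 5) ^ q ^ 5
        = x + x ^ q ^ 2 + d * x ^ q ^ 4 := by
      intro x
      rw [hfrob, hfrob, mul_pow]
      have A : (x ^ q) ^ q ^ 5 = x := by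
        rw [← pow_mul, show q * q ^ 5 = q ^ 6 by ring, hq6]
      have B : (x ^ q ^ 3) ^ q ^ 5 = x ^ q ^ 2 := by
        rw [← pow_mul, show q ^ 3 * q ^ 5 = q ^ 8 by ring, hred x 2 8 (by norm_num)]
      have C : (x ^ q ^ 5) ^ q ^ 5 = x ^ q ^ 4 := by
        rw [← pow_mul, show q ^ 5 * q ^ 5 = q ^ 10 by ring, hred x 4 10 (by norm_num)]
      rw [A, B, C, ← hd]
    have hsemi : ∀ μ x : F, μ ^ q ^ 2 = μ →
        (μ * x) ^ q + (μ * x) ^ q ^ 3 + c * (μ * x) ^ q ^ 5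
          = μ ^ q * (x ^ q + x ^ q ^ 3 + c * x ^ q ^ 5) := by
      intro μ x hμ2
      have m3 : μ ^ q ^ 3 = μ ^ q := by have := muPowOdd hμ2 1; norm_num at this; exact this
      have m5 : μ ^ q ^ 5 = μ ^ q := by have := muPowOdd hμ2 2; norm_num at this; exact this
      rw [mul_pow, mul_pow, mul_pow, m3, m5]
      ring
    have hker : ∃ x : F, x ≠ 0 ∧ x + x ^ q ^ 2 + d * x ^ q ^ 4 = 0 := by
      by_cases hd1 : d = 1
      · obtain ⟨v, hv⟩ := genOutside hq2 hF
        refine ⟨v ^ q ^ 2 + v, ?_, ?_⟩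
        · intro h; exact hv (by linear_combination h - v * h2F)
        · have e2 : (v ^ q ^ 2 + v) ^ q ^ 2 = v ^ q ^ 4 + v ^ q ^ 2 := by
            rw [hfrob, ← pow_mul, show q ^ 2 * q ^ 2 = q ^ 4 by ring]
          have e4 : (v ^ q ^ 2 + v) ^ q ^ 4 = v + v ^ q ^ 4 := by
            rw [hfrob, ← pow_mul, show q ^ 2 * q ^ 4 = q ^ 6 by ring, hq6]
          rw [e2, e4, hd1]
          linear_combination (v + v ^ q ^ 2 + v ^ q ^ 4) * h2F
      · have hdne : d + 1 ≠ 0 := fun h => hd1 (by linear_combination h - h2F)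
        have hd2ne : d2 + 1 ≠ 0 := by
          intro h
          have h1 : d2 = 1 := by linear_combination h - h2F
          exact hd1 (by rw [← hdw, hd4, h1, one_pow, one_pow])
        have hd4ne : d4 + 1 ≠ 0 := by
          intro h
          have h1 : d4 = 1 := by linear_combination h - h2F
          exact hd1 (by rw [← hdw, h1, one_pow])
        have hnum : d * d2 + 1 ≠ 0 := by
          intro h
          have hdd2 : d * d2 = 1 := by linear_combination h - h2F
          have hA : d2 * d4 = 1 := by
            have h9 := congrArg (fun a : F => a ^ q ^ 2) hdd2
            rw [mul_pow, one_pow, ← hd2, ← hd4] at h9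
            exact h9
          have hd4d : d4 = d := by
            calc d4 = (d * d2) * d4 := by rw [hdd2, one_mul]
            _ = d * (d2 * d4) := by ring
            _ = d := by rw [hA, mul_one]
          rw [hd4d] at hE
          have h5 : d + d2 = 0 := by linear_combination hE - d * hdd2 - d * h2F
          have hd2d : d2 = d := by linear_combination h5 - d * h2F
          rw [hd2d] at hdd2
          have hsq : (d + 1) ^ 2 = 0 := by linear_combination hdd2 + (d + 1) * h2F
          have h0 : d + 1 = 0 := by
            exact (pow_eq_zero_iff (by norm_num : (2:ℕ) ≠ 0)).mp hsq
          exact hd1 (by linear_combination h0 - h2F)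
        set y : F := (d * d2 + 1) / (d + 1) with hy
        have hy0 : y ≠ 0 := div_ne_zero hnum hdne
        have hy2 : y ^ q ^ 2 = (d2 * d4 + 1) / (d2 + 1) := by
          rw [hy, div_pow, hfrob, hfrob, mul_pow, one_pow, ← hd2, ← hd4]
        have hy4 : y ^ q ^ 4 = (d4 * d + 1) / (d4 + 1) := by
          rw [show (q : ℕ) ^ 4 = q ^ 2 * q ^ 2 by ring, pow_mul, hy2, div_pow, hfrob, hfrob,
            mul_pow, one_pow, ← hd4, hdw]
        have hnorm : y ^ (q ^ 4 + q ^ 2 + 1) = 1 := by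
          rw [pow_add, pow_add, pow_one, hy4, hy2, hy]
          rw [div_mul_div_comm, div_mul_div_comm]
          rw [div_eq_one_iff_eq (mul_ne_zero (mul_ne_zero hd4ne hd2ne) hdne)]
          linear_combination (1 + d * d2 * d4) * hE - (d4 + d2 + d + d * d2 * d4) * h2F
        obtain ⟨x, hx0, hx2⟩ := rootExtract hq2 hF y hy0 hnorm
        have hx4 : x ^ q ^ 4 = (d2 * d4 + 1) / (d2 + 1) * (y * x) := by
          rw [show (q : ℕ) ^ 4 = q ^ 2 * q ^ 2 by ring, pow_mul, hx2, mul_pow, hy2, hx2]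
        have hkx : x + x ^ q ^ 2 + d * x ^ q ^ 4 = 0 := by
          rw [hx2, hx4]
          have key : 1 + y + d * ((d2 * d4 + 1) / (d2 + 1) * y) = 0 := by
            rw [hy]
            field_simp
            linear_combination (d * d2) * hE
              + (d + d * d2 + d2 + 1) * h2F
          linear_combination x * key
        exact ⟨x, hx0, hkx⟩
    obtain ⟨x, hx0, hxk⟩ := hker
    exact finalContr hq2 hF (f := fun x : F => x ^ q + x ^ q ^ 3 + c * x ^ q ^ 5) hsemi hscat x hx0
      ((pow_eq_zero_iff (pow_ne_zero 5 hqne)).mp (by rw [hf5]; exact hxk))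
  · -- s = 5
    simp only [show 3 * 5 = 15 from rfl, show 5 * 5 = 25 from rfl] at hscat
    have hf5 : ∀ x : F, (x ^ q ^ 5 + x ^ q ^ 15 + c * x ^ q ^ 25) ^ q ^ 5
        = d * x + x ^ q ^ 2 + x ^ q ^ 4 := by
      intro x
      rw [hfrob, hfrob, mul_pow]
      have A : (x ^ q ^ 5) ^ q ^ 5 = x ^ q ^ 4 := by
        rw [← pow_mul, show q ^ 5 * q ^ 5 = q ^ 10 by ring, hred x 4 10 (by norm_num)]
      have B : (x ^ q ^ 15) ^ q ^ 5 = x ^ q ^ 2 := by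
        rw [← pow_mul, show q ^ 15 * q ^ 5 = q ^ 20 by ring, hred x 14 20 (by norm_num),
          hred x 8 14 (by norm_num), hred x 2 8 (by norm_num)]
      have C : (x ^ q ^ 25) ^ q ^ 5 = x := by
        rw [← pow_mul, show q ^ 25 * q ^ 5 = q ^ 30 by ring, hred x 24 30 (by norm_num),
          hred x 18 24 (by norm_num), hred x 12 18 (by norm_num), hred x 6 12 (by norm_num), hq6]
      rw [A, B, C, ← hd]
      ring
    have hsemi : ∀ μ x : F, μ ^ q ^ 2 = μ →
        (μ * x) ^ q ^ 5 + (μ * x) ^ q ^ 15 + c * (μ * x) ^ q ^ 25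
          = μ ^ q * (x ^ q ^ 5 + x ^ q ^ 15 + c * x ^ q ^ 25) := by
      intro μ x hμ2
      have m5 : μ ^ q ^ 5 = μ ^ q := by have := muPowOdd hμ2 2; norm_num at this; exact this
      have m15 : μ ^ q ^ 15 = μ ^ q := by have := muPowOdd hμ2 7; norm_num at this; exact this
      have m25 : μ ^ q ^ 25 = μ ^ q := by have := muPowOdd hμ2 12; norm_num at this; exact this
      rw [mul_pow, mul_pow, mul_pow, m5, m15, m25]
      ring
    have hker : ∃ x : F, x ≠ 0 ∧ d * x + x ^ q ^ 2 + x ^ q ^ 4 = 0 := by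
      by_cases hd1 : d = 1
      · obtain ⟨v, hv⟩ := genOutside hq2 hF
        refine ⟨v ^ q ^ 2 + v, ?_, ?_⟩
        · intro h; exact hv (by linear_combination h - v * h2F)
        · have e2 : (v ^ q ^ 2 + v) ^ q ^ 2 = v ^ q ^ 4 + v ^ q ^ 2 := by
            rw [hfrob, ← pow_mul, show q ^ 2 * q ^ 2 = q ^ 4 by ring]
          have e4 : (v ^ q ^ 2 + v) ^ q ^ 4 = v + v ^ q ^ 4 := by
            rw [hfrob, ← pow_mul, show q ^ 2 * q ^ 4 = q ^ 6 by ring, hq6]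
          rw [e2, e4, hd1]
          linear_combination (v + v ^ q ^ 2 + v ^ q ^ 4) * h2F
      · have hdne : d + 1 ≠ 0 := fun h => hd1 (by linear_combination h - h2F)
        have hd2ne : d2 + 1 ≠ 0 := by
          intro h
          have h1 : d2 = 1 := by linear_combination h - h2F
          exact hd1 (by rw [← hdw, hd4, h1, one_pow, one_pow])
        have hd4ne : d4 + 1 ≠ 0 := by
          intro h
          have h1 : d4 = 1 := by linear_combination h - h2F
          exact hd1 (by rw [← hdw, h1, one_pow])
        set y : F := (d + 1) / (d2 + 1) with hy
        have hy0 : y ≠ 0 := div_ne_zero hdne hd2ne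
        have hy2 : y ^ q ^ 2 = (d2 + 1) / (d4 + 1) := by
          rw [hy, div_pow, hfrob, hfrob, one_pow, ← hd2, ← hd4]
        have hy4 : y ^ q ^ 4 = (d4 + 1) / (d + 1) := by
          rw [show (q : ℕ) ^ 4 = q ^ 2 * q ^ 2 by ring, pow_mul, hy2, div_pow, hfrob, hfrob,
            one_pow, ← hd4, hdw]
        have hnorm : y ^ (q ^ 4 + q ^ 2 + 1) = 1 := by
          rw [pow_add, pow_add, pow_one, hy4, hy2, hy]
          rw [div_mul_div_comm, div_mul_div_comm]
          rw [div_eq_one_iff_eq (mul_ne_zero (mul_ne_zero hdne hd4ne) hd2ne)]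
          ring
        obtain ⟨x, hx0, hx2⟩ := rootExtract hq2 hF y hy0 hnorm
        have hx4 : x ^ q ^ 4 = (d2 + 1) / (d4 + 1) * (y * x) := by
          rw [show (q : ℕ) ^ 4 = q ^ 2 * q ^ 2 by ring, pow_mul, hx2, mul_pow, hy2, hx2]
        have hkx : d * x + x ^ q ^ 2 + x ^ q ^ 4 = 0 := by
          rw [hx2, hx4]
          have key : d + y + (d2 + 1) / (d4 + 1) * y = 0 := by
            rw [hy]
            field_simp
            linear_combination hE
              + (d * d4 + d * d2 + d + 1) * h2F
          linear_combination x * key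
        exact ⟨x, hx0, hkx⟩
    obtain ⟨x, hx0, hxk⟩ := hker
    exact finalContr hq2 hF (f := fun x : F => x ^ q ^ 5 + x ^ q ^ 15 + c * x ^ q ^ 25)
      hsemi hscat x hx0 ((pow_eq_zero_iff (pow_ne_zero 5 hqne)).mp (by rw [hf5]; exact hxk))
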